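/- arXiv:1306.3418 — 2 statements merged into one kernel-verified Lean document; each statement's English description precedes it below -/
import Mathlib

section
/- Let ≾ be a total preorder on a finite set A with at least two equivalence classes, and let ψ be a predicate on A. For any u ∈ A, the following are equivalent: (i) some element v with v ∼ u satisfies ψ(v); (ii) either there exist y, x with psucc(u,y), psucc(x,y), and ψ(x), or there exist y, x with psucc(y,u), psucc(y,x), and ψ(x). -/
theorem stmt_15 {A : Type*} [Fintype A] (r : A → A → Prop)
    (hrefl : ∀ u, r u u)
    (htrans : ∀ u v w, r u v → r v w → r u w)
    (htotal : ∀ u v, r u v ∨ r v u)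
    -- at least two equivalence classes
    (htwo : ∃ a b : A, ¬ (r a b ∧ r b a))
    (ψ : A → Prop) :
    let sim : A → A → Prop := fun u v => r u v ∧ r v u
    let prec : A → A → Prop := fun u v => r u v ∧ ¬ r v u
    let psucc : A → A → Prop := fun u v => prec u v ∧ ¬ ∃ w, prec u w ∧ prec w v
    ∀ u : A, (∃ v, sim u v ∧ ψ v) ↔
      ((∃ y x, psucc u y ∧ psucc x y ∧ ψ x) ∨
       (∃ y x, psucc y u ∧ psucc y x ∧ ψ x)) := by
  intro sim prec psucc u
  have ptrans : ∀ {a b c}, prec a b → prec b c → prec a c := by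
    rintro a b c ⟨h1, h2⟩ ⟨h3, h4⟩
    exact ⟨htrans _ _ _ h1 h3, fun h => h4 (htrans _ _ _ h h1)⟩
  haveI : IsTrans A prec := ⟨fun a b c => ptrans⟩
  haveI : IsIrrefl A prec := ⟨fun a h => h.2 h.1⟩
  have wf : WellFounded prec := Finite.wellFounded_of_trans_of_irrefl prec
  haveI : IsTrans A (fun a b => prec b a) := ⟨fun a b c h1 h2 => ptrans h2 h1⟩
  haveI : IsIrrefl A (fun a b => prec b a) := ⟨fun a h => h.2 h.1⟩
  have wf' : WellFounded (fun a b => prec b a) :=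
    Finite.wellFounded_of_trans_of_irrefl _
  constructor
  · rintro ⟨v, ⟨huv, hvu⟩, hψ⟩
    -- there exists something strictly above or below u
    obtain ⟨a, b, hab⟩ := htwo
    have hex : (∃ w, prec u w) ∨ (∃ w, prec w u) := by
      by_cases h1 : r u a ∧ r a u
      · -- u ~ a, so u not ~ b
        rcases htotal u b with h | h
        · left; exact ⟨b, h, fun hbu => hab ⟨htrans _ _ _ h1.2 h, htrans _ _ _ hbu h1.1⟩⟩
        · right; exact ⟨b, h, fun hub => hab ⟨htrans _ _ _ h1.2 hub, htrans _ _ _ h h1.1⟩⟩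
      · rcases htotal u a with h | h
        · left; exact ⟨a, h, fun hau => h1 ⟨h, hau⟩⟩
        · right; exact ⟨a, h, fun hua => h1 ⟨hua, h⟩⟩
    rcases hex with ⟨w, hw⟩ | ⟨w, hw⟩
    · obtain ⟨y, hy, hmin⟩ := wf.has_min {w | prec u w} ⟨w, hw⟩
      have hsu : psucc u y := ⟨hy, fun ⟨z, h1, h2⟩ => hmin z h1 h2⟩
      have hpv : prec v y :=
        ⟨htrans _ _ _ hvu hy.1, fun h => hy.2 (htrans _ _ _ h hvu)⟩
      have hsv : psucc v y := by
        refine ⟨hpv, fun ⟨z, h1, h2⟩ => ?_⟩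
        have : prec u z := ⟨htrans _ _ _ huv h1.1, fun h => h1.2 (htrans _ _ _ h huv)⟩
        exact hsu.2 ⟨z, this, h2⟩
      exact Or.inl ⟨y, v, hsu, hsv, hψ⟩
    · obtain ⟨y, hy, hmin⟩ := wf'.has_min {w | prec w u} ⟨w, hw⟩
      have hsu : psucc y u := ⟨hy, fun ⟨z, h1, h2⟩ => hmin z h2 h1⟩
      have hpv : prec y v :=
        ⟨htrans _ _ _ hy.1 huv, fun h => hy.2 (htrans _ _ _ huv h)⟩
      have hsv : psucc y v := by
        refine ⟨hpv, fun ⟨z, h1, h2⟩ => ?_⟩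
        have : prec z u := ⟨htrans _ _ _ h2.1 hvu, fun h => h2.2 (htrans _ _ _ hvu h)⟩
        exact hsu.2 ⟨z, h1, this⟩
      exact Or.inr ⟨y, v, hsu, hsv, hψ⟩
  · rintro (⟨y, x, hu, hx, hψ⟩ | ⟨y, x, hu, hx, hψ⟩)
    · refine ⟨x, ⟨?_, ?_⟩, hψ⟩
      · rcases htotal u x with h | h
        · exact h
        · by_contra h'
          exact hx.2 ⟨u, ⟨h, h'⟩, hu.1⟩
      · rcases htotal x u with h | h
        · exact h
        · by_contra h'
          exact hu.2 ⟨x, ⟨h, h'⟩, hx.1⟩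
    · refine ⟨x, ⟨?_, ?_⟩, hψ⟩
      · rcases htotal u x with h | h
        · exact h
        · by_contra h'
          exact hu.2 ⟨x, hx.1, ⟨h, h'⟩⟩
      · rcases htotal x u with h | h
        · exact h
        · by_contra h'
          exact hx.2 ⟨u, hu.1, ⟨h, h'⟩⟩
end

section
/- Let A be a finite set with a strict linear order < and a total preorder ≾ whose equivalence classes are C_0 ≺ ⋯ ≺ C_n. Suppose every element not in C_n has an (lsucc,psucc)-successor and every element not in C_0 has an (lsucc,psucc)-predecessor, where an (lsucc,psucc)-successor of u is a v with lsucc(u,v) and psucc(u,v). Then for every 0 ≤ i < n, the map sending u ∈ C_i to its (lsucc,psucc)-successor is a bijection from C_i to C_{i+1}; in particular all classes C_0, …, C_n have the same cardinality. -/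
theorem stmt_16 {A : Type*} [Fintype A]
    (lt : A → A → Prop) (r : A → A → Prop)
    (hirr : ∀ u, ¬ lt u u)
    (lttrans : ∀ u v w, lt u v → lt v w → lt u w)
    (lttri : ∀ u v, lt u v ∨ u = v ∨ lt v u)
    (hrefl : ∀ u, r u u)
    (rtrans : ∀ u v w, r u v → r v w → r u w)
    (htotal : ∀ u v, r u v ∨ r v u)
    (n : ℕ) (C : Fin (n + 1) → Set A)
    (hclass : ∀ i, ∃ u, C i = {v | r u v ∧ r v u})
    (hcover : ∀ u, ∃ i, u ∈ C i)
    (hmono : ∀ i j : Fin (n + 1), i < j →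
      ∀ u ∈ C i, ∀ v ∈ C j, r u v ∧ ¬ r v u) :
    let lsucc : A → A → Prop := fun u v => lt u v ∧ ¬ ∃ w, lt u w ∧ lt w v
    let prec : A → A → Prop := fun u v => r u v ∧ ¬ r v u
    let psucc : A → A → Prop := fun u v => prec u v ∧ ¬ ∃ w, prec u w ∧ prec w v
    (∀ u, u ∉ C (Fin.last n) → ∃ v, lsucc u v ∧ psucc u v) →
    (∀ u, u ∉ C 0 → ∃ v, lsucc v u ∧ psucc v u) →
    ((∀ i : Fin n, ∃ f : A → A,
        Set.BijOn f (C i.castSucc) (C i.succ) ∧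
        ∀ u ∈ C i.castSucc, lsucc u (f u) ∧ psucc u (f u)) ∧
     (∀ i j : Fin (n + 1), (C i).ncard = (C j).ncard)) := by
  intro lsucc prec psucc hS hP
  classical
  have hrel : ∀ i, ∀ u ∈ C i, ∀ v ∈ C i, r u v := by
    intro i u hu v hv
    obtain ⟨a, ha⟩ := hclass i
    rw [ha] at hu hv
    exact rtrans u a v hu.2 hv.1
  have hdisj : ∀ (i j : Fin (n+1)) (u : A), u ∈ C i → u ∈ C j → i = j := by
    intro i j u hui huj
    by_contra hne
    rcases lt_or_gt_of_ne hne with h | h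
    · exact (hmono i j h u hui u huj).2 (hrefl u)
    · exact (hmono j i h u huj u hui).2 (hrefl u)
  have hnonempty : ∀ i, ∃ a, a ∈ C i := by
    intro i; obtain ⟨a, ha⟩ := hclass i
    exact ⟨a, by rw [ha]; exact ⟨hrefl a, hrefl a⟩⟩
  have key : ∀ (i j : Fin (n+1)) (u v : A), u ∈ C i → v ∈ C j → psucc u v →
      (j : ℕ) = (i : ℕ) + 1 := by
    intro i j u v hui hvj hpv
    have hij : i < j := by
      rcases lt_trichotomy i j with h | h | h
      · exact h
      · exact absurd (hrel i v (h ▸ hvj) u hui) hpv.1.2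
      · exact absurd (hmono j i h v hvj u hui).1 hpv.1.2
    have hij' : (i : ℕ) < (j : ℕ) := hij
    have hle : (j : ℕ) ≤ (i : ℕ) + 1 := by
      by_contra hgt
      push_neg at hgt
      have hk : (i : ℕ) + 1 < n + 1 := lt_trans hgt j.isLt
      set k : Fin (n+1) := ⟨(i : ℕ) + 1, hk⟩ with hkdef
      obtain ⟨m, hm⟩ := hnonempty k
      have h1 : prec u m := hmono i k (by simp [hkdef, Fin.lt_def]) u hui m hm
      have h2 : prec m v := hmono k j (by simp [hkdef, Fin.lt_def, hgt]) m hm v hvj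
      exact hpv.2 ⟨m, h1, h2⟩
    omega
  have lsucc_unique : ∀ u v w, lsucc u v → lsucc u w → v = w := by
    intro u v w hv hw
    rcases lttri v w with h | h | h
    · exact (hw.2 ⟨v, hv.1, h⟩).elim
    · exact h
    · exact (hv.2 ⟨w, hw.1, h⟩).elim
  have lsucc_unique' : ∀ u v w, lsucc v u → lsucc w u → v = w := by
    intro u v w hv hw
    rcases lttri v w with h | h | h
    · exact (hv.2 ⟨w, h, hw.1⟩).elim
    · exact h
    · exact (hw.2 ⟨v, h, hv.1⟩).elim
  have main : ∀ i : Fin n, ∃ f : A → A,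
      Set.BijOn f (C i.castSucc) (C i.succ) ∧
      ∀ u ∈ C i.castSucc, lsucc u (f u) ∧ psucc u (f u) := by
    intro i
    have hex : ∀ u, u ∈ C i.castSucc → ∃ v, lsucc u v ∧ psucc u v := by
      intro u hu
      apply hS
      intro hlast
      have := hdisj _ _ u hu hlast
      have h2 : (i.castSucc : ℕ) = n := by rw [this]; simp [Fin.last]
      have := i.isLt
      simp [Fin.castSucc, Fin.castAdd, Fin.castLE] at h2
      omega
    set f : A → A := fun u => if h : u ∈ C i.castSucc then (hex u h).choose else u with hf
    have hfspec : ∀ u (hu : u ∈ C i.castSucc), lsucc u (f u) ∧ psucc u (f u) := by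
      intro u hu
      have := (hex u hu).choose_spec
      simp only [hf, dif_pos hu]
      exact this
    have hmaps : Set.MapsTo f (C i.castSucc) (C i.succ) := by
      intro u hu
      obtain ⟨j, hj⟩ := hcover (f u)
      have hk := key i.castSucc j u (f u) hu hj (hfspec u hu).2
      have : j = i.succ := by
        apply Fin.ext
        simpa using hk
      rwa [this] at hj
    refine ⟨f, ⟨hmaps, ?_, ?_⟩, hfspec⟩
    · intro u hu v hv heq
      exact lsucc_unique' (f u) u v (hfspec u hu).1 (heq ▸ (hfspec v hv).1)
    · intro w hw
      have hw0 : w ∉ C 0 := by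
        intro h0
        have := hdisj _ _ w hw h0
        have : (i.succ : ℕ) = (0 : Fin (n+1)) := by rw [this]
        simp at this
      obtain ⟨v, hlv, hpv⟩ := hP w hw0
      obtain ⟨k, hk⟩ := hcover v
      have hkey := key k i.succ v w hk hw hpv
      have hkcast : k = i.castSucc := by
        apply Fin.ext
        simp only [Fin.val_succ] at hkey
        simp only [Fin.coe_castSucc]
        omega
      rw [hkcast] at hk
      refine ⟨v, hk, ?_⟩
      exact lsucc_unique v (f v) w (hfspec v hk).1 hlv
  refine ⟨main, ?_⟩
  have card_step : ∀ i : Fin n, (C i.castSucc).ncard = (C i.succ).ncard := by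
    intro i
    obtain ⟨f, hbij, -⟩ := main i
    rw [← hbij.image_eq]
    exact (Set.ncard_image_of_injOn hbij.injOn).symm
  have card0 : ∀ i : Fin (n+1), (C i).ncard = (C 0).ncard := by
    intro i
    obtain ⟨m, hm⟩ := i
    induction m with
    | zero => rfl
    | succ k ih =>
      have hkn : k < n := by omega
      have h1 : (⟨k+1, hm⟩ : Fin (n+1)) = (⟨k, hkn⟩ : Fin n).succ := rfl
      have h2 : (⟨k, Nat.lt_of_succ_lt hm⟩ : Fin (n+1)) = (⟨k, hkn⟩ : Fin n).castSucc := rfl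
      rw [h1, ← card_step ⟨k, hkn⟩, ← h2]
      exact ih (Nat.lt_of_succ_lt hm)
  intro i j
  rw [card0 i, card0 j]
end
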